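/- Let G be a connected vertex-transitive d-regular graph and let k be a positive integer with k < diam(G). Then every vertex of G^k has degree at least (2k+1)(d+1)/3 − 1, and hence G^k has average degree at least (2k+1)(d+1)/3 − 1. -/

import Mathlib

open Set
set_option linter.unusedSectionVars false

namespace MaderAux

variable {V : Type*} [Fintype V] (G : SimpleGraph V)

/-- The (outer) boundary of a set of vertices. -/
def bd (X : Set V) : Set V := {v | v ∉ X ∧ ∃ u ∈ X, G.Adj u v}

/-- The exterior of a set of vertices. -/
def oute (X : Set V) : Set V := (X ∪ bd G X)ᶜ

/-- A candidate (one side of a separation). -/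
def cand (X : Set V) : Prop := X.Nonempty ∧ (oute G X).Nonempty

noncomputable def kappa : ℕ := sInf {n | ∃ X : Set V, cand G X ∧ (bd G X).ncard = n}

def frag (X : Set V) : Prop := cand G X ∧ (bd G X).ncard = kappa G

noncomputable def atomSize : ℕ := sInf {n | ∃ X : Set V, frag G X ∧ X.ncard = n}

def atom (X : Set V) : Prop := frag G X ∧ X.ncard = atomSize G

variable {G}

lemma mem_oute {X : Set V} {x : V} : x ∈ oute G X ↔ x ∉ X ∧ x ∉ bd G X := by
  simp [oute, not_or]

lemma disj_bd {X : Set V} : Disjoint X (bd G X) :=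
  Set.disjoint_left.2 fun _ hx hb => hb.1 hx

lemma disj_oute {X : Set V} : Disjoint X (oute G X) :=
  Set.disjoint_left.2 fun _ hx hb => (mem_oute.1 hb).1 hx

lemma disj_bd_oute {X : Set V} : Disjoint (bd G X) (oute G X) :=
  Set.disjoint_left.2 fun _ hx hb => (mem_oute.1 hb).2 hx

lemma tri_cover {X : Set V} (x : V) : x ∈ X ∨ x ∈ bd G X ∨ x ∈ oute G X := by
  by_cases h1 : x ∈ X
  · exact Or.inl h1
  by_cases h2 : x ∈ bd G X
  · exact Or.inr (Or.inl h2)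
  · exact Or.inr (Or.inr (mem_oute.2 ⟨h1, h2⟩))

lemma ncard_tri (S X : Set V) :
    S.ncard = (S ∩ X).ncard + (S ∩ bd G X).ncard + (S ∩ oute G X).ncard := by
  have h1 : S = (S ∩ X) ∪ ((S ∩ bd G X) ∪ (S ∩ oute G X)) := by
    ext x
    simp only [mem_union, mem_inter_iff]
    have := tri_cover (X := X) (G := G) x
    tauto
  have d1 : Disjoint (S ∩ bd G X) (S ∩ oute G X) :=
    (disj_bd_oute.mono inter_subset_right inter_subset_right)
  have d2 : Disjoint (S ∩ X) ((S ∩ bd G X) ∪ (S ∩ oute G X)) := by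
    refine Disjoint.union_right ?_ ?_
    · exact disj_bd.mono inter_subset_right inter_subset_right
    · exact disj_oute.mono inter_subset_right inter_subset_right
  nth_rewrite 1 [h1]
  rw [Set.ncard_union_eq d2 (Set.toFinite _) (Set.toFinite _),
    Set.ncard_union_eq d1 (Set.toFinite _) (Set.toFinite _), Nat.add_assoc]

lemma kappa_le {X : Set V} (h : cand G X) : kappa G ≤ (bd G X).ncard :=
  Nat.sInf_le ⟨X, h, rfl⟩

lemma atomSize_le {X : Set V} (h : frag G X) : atomSize G ≤ X.ncard :=
  Nat.sInf_le ⟨X, h, rfl⟩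

lemma atom_le_frag {A F : Set V} (hA : atom G A) (hF : frag G F) : A.ncard ≤ F.ncard :=
  hA.2 ▸ atomSize_le hF

/-- Key inclusion for the boundary of an intersection. -/
lemma bd_inter_subset (A F : Set V) :
    bd G (A ∩ F) ⊆ (A ∩ bd G F) ∪ (bd G A ∩ F) ∪ (bd G A ∩ bd G F) := by
  rintro w ⟨hw, u, ⟨huA, huF⟩, hadj⟩
  have hA : w ∈ A ∨ w ∈ bd G A := by
    by_cases h : w ∈ A
    · exact Or.inl h
    · exact Or.inr ⟨h, u, huA, hadj⟩
  have hF : w ∈ F ∨ w ∈ bd G F := by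
    by_cases h : w ∈ F
    · exact Or.inl h
    · exact Or.inr ⟨h, u, huF, hadj⟩
  rcases hA with hA | hA <;> rcases hF with hF | hF
  · exact absurd ⟨hA, hF⟩ hw
  · exact Or.inl (Or.inl ⟨hA, hF⟩)
  · exact Or.inl (Or.inr ⟨hA, hF⟩)
  · exact Or.inr ⟨hA, hF⟩

lemma oute_inter_supset (A F : Set V) : oute G A ∪ oute G F ⊆ oute G (A ∩ F) := by
  rintro x (hx | hx) <;> rw [mem_oute] at hx ⊢
  · refine ⟨fun h => hx.1 h.1, fun h => ?_⟩
    rcases bd_inter_subset A F h with (⟨h1, _⟩ | ⟨h1, _⟩) | ⟨h1, _⟩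
    · exact hx.1 h1
    · exact hx.2 h1
    · exact hx.2 h1
  · refine ⟨fun h => hx.1 h.2, fun h => ?_⟩
    rcases bd_inter_subset A F h with (⟨_, h1⟩ | ⟨_, h1⟩) | ⟨_, h1⟩
    · exact hx.2 h1
    · exact hx.1 h1
    · exact hx.2 h1

lemma frag_oute {F : Set V} (hF : frag G F) :
    frag G (oute G F) ∧ bd G (oute G F) = bd G F ∧ oute G (oute G F) = F := by
  have hsub : bd G (oute G F) ⊆ bd G F := by
    rintro w ⟨hw, u, hu, hadj⟩
    have hwF : w ∉ F := by
      intro hwF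
      exact (mem_oute.1 hu).2 ⟨(mem_oute.1 hu).1, w, hwF, hadj.symm⟩
    by_cases h : w ∈ bd G F
    · exact h
    · exact absurd (mem_oute.2 ⟨hwF, h⟩) hw
  have hcand : cand G (oute G F) := by
    refine ⟨hF.1.2, ?_⟩
    obtain ⟨a, ha⟩ := hF.1.1
    exact ⟨a, mem_oute.2 ⟨fun h => disj_oute.ne_of_mem ha h rfl,
      fun h => (disj_bd.mono_right hsub).ne_of_mem ha h rfl⟩⟩
  have hbd : bd G (oute G F) = bd G F := by
    apply Set.eq_of_subset_of_ncard_le hsub _ (Set.toFinite _)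
    rw [hF.2]; exact kappa_le hcand
  have houte : oute G (oute G F) = F := by
    ext x
    constructor
    · intro h
      rcases tri_cover (X := F) (G := G) x with hF | hF | hF
      · exact hF
      · exact absurd (hbd ▸ hF) (mem_oute.1 h).2
      · exact absurd hF (mem_oute.1 h).1
    · intro hx
      exact mem_oute.2 ⟨fun h => disj_oute.ne_of_mem hx h rfl,
        fun h => disj_bd.ne_of_mem hx (hbd ▸ h) rfl⟩
  exact ⟨⟨hcand, hbd ▸ hF.2⟩, hbd, houte⟩

end MaderAux

namespace MaderAux
variable {V : Type*} [Fintype V] {G : SimpleGraph V}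
set_option linter.unusedSectionVars false

lemma ncard_pos_of_nonempty {S : Set V} (h : S.Nonempty) : 1 ≤ S.ncard :=
  (Set.ncard_pos (Set.toFinite _)).2 h

lemma ncard_union3_le (X Y Z : Set V) :
    (X ∪ Y ∪ Z).ncard ≤ X.ncard + Y.ncard + Z.ncard :=
  le_trans (Set.ncard_union_le _ _) (Nat.add_le_add_right (Set.ncard_union_le _ _) _)

/-- The key lemma of Mader–Watkins theory: an atom meeting a fragment is contained in it. -/
lemma atom_subset_of_inter {A F : Set V} (hA : atom G A) (hF : frag G F)
    (h11 : (A ∩ F).Nonempty) : A ⊆ F := by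
  obtain ⟨hFo, hbdFo, houteFo⟩ := frag_oute hF
  obtain ⟨hAo, hbdAo, houteAo⟩ := frag_oute hA.1
  -- Step 1 : |A ∩ ∂F| ≤ |∂A ∩ F*|
  have step1 : (A ∩ bd G F).ncard ≤ (bd G A ∩ oute G F).ncard := by
    by_cases h33 : (oute G A ∩ oute G F).Nonempty
    · have hc : cand G (oute G A ∩ oute G F) := by
        refine ⟨h33, ?_⟩
        obtain ⟨a, ha⟩ := hA.1.1.1
        exact ⟨a, oute_inter_supset _ _ (Or.inl (by rw [houteAo]; exact ha))⟩
      have h1 : kappa G ≤ (bd G (oute G A ∩ oute G F)).ncard := kappa_le hc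
      have h2 : (bd G (oute G A ∩ oute G F)).ncard ≤
          (oute G A ∩ bd G F).ncard + (bd G A ∩ oute G F).ncard + (bd G A ∩ bd G F).ncard := by
        refine le_trans (Set.ncard_le_ncard ?_ (Set.toFinite _)) (ncard_union3_le _ _ _)
        have := bd_inter_subset (G := G) (oute G A) (oute G F)
        rwa [hbdAo, hbdFo] at this
      have h3 : (bd G F).ncard =
          (bd G F ∩ A).ncard + (bd G F ∩ bd G A).ncard + (bd G F ∩ oute G A).ncard :=
        ncard_tri _ _
      rw [hF.2] at h3
      rw [inter_comm (bd G F) A, inter_comm (bd G F) (bd G A),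
        inter_comm (bd G F) (oute G A)] at h3
      omega
    · rw [Set.not_nonempty_iff_eq_empty] at h33
      have hsz : A.ncard ≤ (oute G F).ncard := atom_le_frag hA hFo
      have e1 : (oute G F).ncard = (oute G F ∩ A).ncard + (oute G F ∩ bd G A).ncard
          + (oute G F ∩ oute G A).ncard := ncard_tri _ _
      have e1' : (oute G F ∩ oute G A).ncard = 0 := by
        rw [inter_comm] at h33; rw [h33, Set.ncard_empty]
      have e2 : A.ncard = (A ∩ F).ncard + (A ∩ bd G F).ncard + (A ∩ oute G F).ncard :=
        ncard_tri _ _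
      have hpos : 1 ≤ (A ∩ F).ncard := ncard_pos_of_nonempty h11
      rw [inter_comm (oute G F) A] at e1
      rw [inter_comm (oute G F) (bd G A)] at e1
      omega
  -- Step 2 : A ∩ F is a fragment
  have hcandAF : cand G (A ∩ F) := by
    refine ⟨h11, ?_⟩
    obtain ⟨b, hb⟩ := hF.1.2
    exact ⟨b, oute_inter_supset _ _ (Or.inr hb)⟩
  have hb_le : (bd G (A ∩ F)).ncard ≤ kappa G := by
    have h2 : (bd G (A ∩ F)).ncard ≤
        (A ∩ bd G F).ncard + (bd G A ∩ F).ncard + (bd G A ∩ bd G F).ncard :=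
      le_trans (Set.ncard_le_ncard (bd_inter_subset A F) (Set.toFinite _)) (ncard_union3_le _ _ _)
    have h3 : (bd G A).ncard =
        (bd G A ∩ F).ncard + (bd G A ∩ bd G F).ncard + (bd G A ∩ oute G F).ncard :=
      ncard_tri _ _
    rw [hA.1.2] at h3
    omega
  have hfragAF : frag G (A ∩ F) := ⟨hcandAF, le_antisymm hb_le (kappa_le hcandAF)⟩
  have hle : A.ncard ≤ (A ∩ F).ncard := atom_le_frag hA hfragAF
  have heq : A ∩ F = A :=
    Set.eq_of_subset_of_ncard_le inter_subset_left hle (Set.toFinite _)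
  intro x hx
  rw [← heq] at hx
  exact hx.2

lemma atom_eq_of_inter {A B : Set V} (hA : atom G A) (hB : atom G B)
    (h : (A ∩ B).Nonempty) : A = B := by
  have h1 : A ⊆ B := atom_subset_of_inter hA hB.1 h
  have h2 : B ⊆ A := atom_subset_of_inter hB hA.1 (by rwa [inter_comm] at h)
  exact le_antisymm h1 h2

end MaderAux

namespace MaderAux
variable {V : Type*} [Fintype V] {G : SimpleGraph V}
set_option linter.unusedSectionVars false

lemma bd_image (φ : G ≃g G) (X : Set V) : bd G (φ '' X) = φ '' bd G X := by
  ext w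
  constructor
  · rintro ⟨hw, u, ⟨x, hx, rfl⟩, hadj⟩
    refine ⟨φ.symm w, ⟨?_, x, hx, ?_⟩, φ.apply_symm_apply w⟩
    · intro h
      exact hw ⟨φ.symm w, h, φ.apply_symm_apply w⟩
    · have : G.Adj (φ x) (φ (φ.symm w)) := by rwa [φ.apply_symm_apply]
      exact φ.map_adj_iff.1 this
  · rintro ⟨y, ⟨hy, u, hu, hadj⟩, rfl⟩
    refine ⟨?_, φ u, ⟨u, hu, rfl⟩, φ.map_adj_iff.2 hadj⟩
    rintro ⟨x, hx, hxy⟩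
    exact hy (φ.injective hxy ▸ hx)

lemma oute_image (φ : G ≃g G) (X : Set V) : oute G (φ '' X) = φ '' oute G X := by
  rw [oute, oute, bd_image, ← Set.image_union, ← Set.image_compl_eq φ.bijective]

lemma ncard_image (φ : G ≃g G) (X : Set V) : (φ '' X).ncard = X.ncard :=
  Set.ncard_image_of_injective _ φ.injective

lemma frag_image (φ : G ≃g G) {X : Set V} (h : frag G X) : frag G (φ '' X) := by
  refine ⟨⟨h.1.1.image _, ?_⟩, ?_⟩
  · rw [oute_image]; exact h.1.2.image _
  · rw [bd_image, ncard_image]; exact h.2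

lemma atom_image (φ : G ≃g G) {X : Set V} (h : atom G X) : atom G (φ '' X) :=
  ⟨frag_image φ h.1, by rw [ncard_image]; exact h.2⟩

lemma exists_atom (hcand : ∃ X : Set V, cand G X) : ∃ A : Set V, atom G A := by
  obtain ⟨X, hX⟩ := hcand
  have h1 : ∃ F : Set V, frag G F := by
    have : {n | ∃ Y : Set V, cand G Y ∧ (bd G Y).ncard = n}.Nonempty := ⟨_, X, hX, rfl⟩
    obtain ⟨Y, hY, hYc⟩ := Nat.sInf_mem this
    exact ⟨Y, hY, hYc⟩
  obtain ⟨F, hF⟩ := h1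
  have : {n | ∃ Y : Set V, frag G Y ∧ Y.ncard = n}.Nonempty := ⟨_, F, hF, rfl⟩
  obtain ⟨A, hA, hAc⟩ := Nat.sInf_mem this
  exact ⟨A, hA, hAc⟩

lemma exists_atom_mem (hcand : ∃ X : Set V, cand G X)
    (htrans : ∀ u v : V, ∃ φ : G ≃g G, φ u = v) (v : V) :
    ∃ A : Set V, atom G A ∧ v ∈ A := by
  obtain ⟨A, hA⟩ := exists_atom hcand
  obtain ⟨a, ha⟩ := hA.1.1.1
  obtain ⟨φ, hφ⟩ := htrans a v
  exact ⟨φ '' A, atom_image φ hA, ⟨a, ha, hφ⟩⟩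

lemma bd_nonempty (hconn : G.Connected) {X : Set V} (hX : X.Nonempty)
    (hX' : (oute G X).Nonempty) : (bd G X).Nonempty := by
  obtain ⟨a, ha⟩ := hX
  obtain ⟨b, hb⟩ := hX'
  have hr : G.Reachable a b := hconn.preconnected a b
  obtain ⟨d, _, hd1, hd2⟩ := hr.some.exists_boundary_dart X ha (mem_oute.1 hb).1
  exact ⟨d.snd, hd2, d.fst, hd1, d.adj⟩

/-- An atom meeting the boundary complement side: every atom touching `bd A` lies inside it. -/
lemma atom_subset_bd {A B : Set V} (hA : atom G A) (hB : atom G B)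
    {v : V} (hv : v ∈ bd G A) (hvB : v ∈ B) : B ⊆ bd G A := by
  intro x hx
  rcases tri_cover (X := A) (G := G) x with h | h | h
  · exfalso
    have := atom_eq_of_inter hB hA ⟨x, hx, h⟩
    exact disj_bd.ne_of_mem (this ▸ hvB) hv rfl
  · exact h
  · exfalso
    obtain ⟨hAo, _, _⟩ := frag_oute hA.1
    have := atom_subset_of_inter hB hAo ⟨x, hx, h⟩
    exact disj_bd_oute.ne_of_mem hv (this hvB) rfl

/-- The Mader–Watkins bound: `2(d+1) ≤ 3κ`. -/
lemma kappa_bound (hconn : G.Connected) {d : ℕ} (hreg : ∀ v : V, (G.neighborSet v).ncard = d)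
    (htrans : ∀ u v : V, ∃ φ : G ≃g G, φ u = v)
    (hcand : ∃ X : Set V, cand G X) : 2 * (d + 1) ≤ 3 * kappa G := by
  obtain ⟨A, hA⟩ := exists_atom hcand
  obtain ⟨a, ha⟩ := hA.1.1.1
  -- d + 1 ≤ |A| + κ
  have h1 : d + 1 ≤ A.ncard + kappa G := by
    have hsub : insert a (G.neighborSet a) ⊆ A ∪ bd G A := by
      rintro x (rfl | hx)
      · exact Or.inl ha
      · by_cases h : x ∈ A
        · exact Or.inl h
        · exact Or.inr ⟨h, a, ha, hx⟩
    have hcard : (insert a (G.neighborSet a)).ncard = d + 1 := by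
      rw [Set.ncard_insert_of_notMem (by simp) (Set.toFinite _), hreg]
    calc d + 1 = (insert a (G.neighborSet a)).ncard := hcard.symm
      _ ≤ (A ∪ bd G A).ncard := Set.ncard_le_ncard hsub (Set.toFinite _)
      _ ≤ A.ncard + (bd G A).ncard := Set.ncard_union_le _ _
      _ = A.ncard + kappa G := by rw [hA.1.2]
  -- 2|A| ≤ κ
  have h2 : 2 * A.ncard ≤ kappa G := by
    obtain ⟨v, hv⟩ := bd_nonempty hconn hA.1.1.1 hA.1.1.2
    obtain ⟨B, hB, hvB⟩ := exists_atom_mem hcand htrans v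
    have hBsub : B ⊆ bd G A := atom_subset_bd hA hB hv hvB
    by_cases hBA : bd G A = B
    · -- single atom case : contradiction
      exfalso
      -- A ∩ B = ∅, both nonempty
      have hABdisj : ∀ x, x ∈ A → x ∉ B := fun x hxA hxB =>
        disj_bd.ne_of_mem hxA (hBA ▸ hxB : x ∈ bd G A) rfl
      -- some element of A is in bd B
      obtain ⟨u, huA, hubdB⟩ : ∃ u, u ∈ A ∧ u ∈ bd G B := by
        obtain ⟨hvnA, u, huA, hadj⟩ := hv
        exact ⟨u, huA, hABdisj u huA, v, hvB, hadj.symm⟩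
      -- A ⊆ bd B
      have hAsubbdB : A ⊆ bd G B := atom_subset_bd hB hA hubdB huA
      -- |A| = |B| = κ
      have hsz : A.ncard = B.ncard := hA.2.trans hB.2.symm
      have hk : kappa G = B.ncard := by rw [← hA.1.2, hBA]
      have hAeq : A = bd G B := by
        apply Set.eq_of_subset_of_ncard_le hAsubbdB _ (Set.toFinite _)
        rw [hB.1.2, hk, ← hsz]
      -- oute A = oute B, hence bd A = bd (oute B) = bd B, i.e. B = A
      have houte : oute G A = oute G B := by
        rw [oute, oute, hBA, ← hAeq, Set.union_comm]
      obtain ⟨hAo, hbdAo, houteAo⟩ := frag_oute hA.1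
      obtain ⟨hBo, hbdBo, houteBo⟩ := frag_oute hB.1
      have : bd G A = bd G B := by rw [← hbdAo, ← hbdBo, houte]
      rw [hBA, ← hAeq] at this
      exact hABdisj a ha (this.symm ▸ ha)
    · -- two disjoint atoms inside bd A
      obtain ⟨w, hw, hwB⟩ : ∃ w, w ∈ bd G A ∧ w ∉ B := by
        by_contra h
        push_neg at h
        exact hBA (le_antisymm h hBsub)
      obtain ⟨C, hC, hwC⟩ := exists_atom_mem hcand htrans w
      have hCsub : C ⊆ bd G A := atom_subset_bd hA hC hw hwC
      have hBC : Disjoint B C := by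
        rw [Set.disjoint_iff_inter_eq_empty]
        by_contra h
        rw [← Ne, ← Set.nonempty_iff_ne_empty] at h
        exact hwB ((atom_eq_of_inter hB hC h) ▸ hwC)
      have : B.ncard + C.ncard ≤ (bd G A).ncard := by
        rw [← Set.ncard_union_eq hBC (Set.toFinite _) (Set.toFinite _)]
        exact Set.ncard_le_ncard (Set.union_subset hBsub hCsub) (Set.toFinite _)
      rw [hA.1.2] at this
      have e1 : B.ncard = A.ncard := hB.2.trans hA.2.symm
      have e2 : C.ncard = A.ncard := hC.2.trans hA.2.symm
      omega
  omega

end MaderAux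

namespace MaderAux
variable {V : Type*} [Fintype V] {G : SimpleGraph V}
set_option linter.unusedSectionVars false

lemma iso_dist (hconn : G.Connected) (φ : G ≃g G) (u v : V) :
    G.dist (φ u) (φ v) = G.dist u v := by
  have key : ∀ (ψ : G ≃g G) (a b : V), G.dist (ψ a) (ψ b) ≤ G.dist a b := by
    intro ψ a b
    obtain ⟨p, hp⟩ := hconn.exists_walk_length_eq_dist a b
    calc G.dist (ψ a) (ψ b) ≤ (p.map ψ.toHom).length := SimpleGraph.dist_le _
      _ = p.length := by simp
      _ = G.dist a b := hp
  refine le_antisymm (key φ u v) ?_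
  have := key φ.symm (φ u) (φ v)
  rwa [φ.symm_apply_apply, φ.symm_apply_apply] at this

variable (G)

def ball (v : V) (j : ℕ) : Set V := {u | G.dist v u ≤ j}

def sph (v : V) (i : ℕ) : Set V := {u | G.dist v u = i}

def ringS (v : V) (m : ℕ) : Set V := {u | 1 ≤ G.dist v u ∧ G.dist v u ≤ m}

variable {G}

lemma bd_ball_subset (hconn : G.Connected) (v : V) (j : ℕ) :
    bd G (ball G v j) ⊆ sph G v (j + 1) := by
  rintro w ⟨hw, u, hu, hadj⟩
  have h1 : G.dist v w ≤ j + 1 := by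
    calc G.dist v w ≤ G.dist v u + G.dist u w := hconn.dist_triangle
      _ ≤ j + 1 := by
          have : G.dist u w = 1 := SimpleGraph.dist_eq_one_iff_adj.2 hadj
          have hu' : G.dist v u ≤ j := hu
          omega
  have h2 : ¬ G.dist v w ≤ j := hw
  simp only [sph, Set.mem_setOf_eq]
  omega

lemma cand_ball (hconn : G.Connected) (v : V) (j : ℕ)
    (h : ∃ u, j + 1 < G.dist v u) : cand G (ball G v j) := by
  obtain ⟨u, hu⟩ := h
  refine ⟨⟨v, by simp [ball, SimpleGraph.dist_self]⟩, u, mem_oute.2 ⟨?_, ?_⟩⟩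
  · simp only [ball, Set.mem_setOf_eq]; omega
  · intro hmem
    have := bd_ball_subset hconn v j hmem
    simp only [sph, Set.mem_setOf_eq] at this
    omega

lemma kappa_le_sph (hconn : G.Connected) (v : V) {i : ℕ} (hi : 1 ≤ i)
    (h : ∃ u, i < G.dist v u) : kappa G ≤ (sph G v i).ncard := by
  obtain ⟨j, rfl⟩ : ∃ j, i = j + 1 := ⟨i - 1, by omega⟩
  calc kappa G ≤ (bd G (ball G v j)).ncard := kappa_le (cand_ball hconn v j h)
    _ ≤ (sph G v (j + 1)).ncard :=
        Set.ncard_le_ncard (bd_ball_subset hconn v j) (Set.toFinite _)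

lemma sph_one (v : V) : sph G v 1 = G.neighborSet v := by
  ext u
  simp only [sph, Set.mem_setOf_eq, SimpleGraph.mem_neighborSet]
  exact SimpleGraph.dist_eq_one_iff_adj

lemma ringS_one (v : V) : ringS G v 1 = sph G v 1 := by
  ext u; simp only [ringS, sph, Set.mem_setOf_eq]; omega

lemma ringS_succ (v : V) (m : ℕ) : ringS G v (m + 1) = ringS G v m ∪ sph G v (m + 1) := by
  ext u; simp only [ringS, sph, Set.mem_setOf_eq, Set.mem_union]; omega

lemma ringS_card (hconn : G.Connected) (v : V) {k : ℕ} (hk : 1 ≤ k)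
    (hfar : ∃ u, k < G.dist v u) {d : ℕ} (hd : (G.neighborSet v).ncard = d) :
    d + (k - 1) * kappa G ≤ (ringS G v k).ncard := by
  induction k, hk using Nat.le_induction with
  | base => simp [ringS_one, sph_one, hd]
  | succ m hm ih =>
    have hfar' : ∃ u, m < G.dist v u := by
      obtain ⟨u, hu⟩ := hfar; exact ⟨u, by omega⟩
    have ih' := ih hfar'
    have hsph : kappa G ≤ (sph G v (m + 1)).ncard :=
      kappa_le_sph hconn v (by omega) hfar
    have hdisj : Disjoint (ringS G v m) (sph G v (m + 1)) := by
      rw [Set.disjoint_left]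
      rintro u ⟨_, h2⟩ h3
      simp only [sph, Set.mem_setOf_eq] at h3
      omega
    rw [ringS_succ, Set.ncard_union_eq hdisj (Set.toFinite _) (Set.toFinite _)]
    have : (m + 1 - 1) * kappa G = (m - 1) * kappa G + kappa G := by
      obtain ⟨j, rfl⟩ : ∃ j, m = j + 1 := ⟨m - 1, by omega⟩
      simp only [Nat.add_sub_cancel]
      ring
    omega

end MaderAux

/-- The `k`-th power of a simple graph `G`: two distinct vertices are adjacent
iff their distance in `G` is at most `k`. -/
def SimpleGraph.power {V : Type*} (G : SimpleGraph V) (k : ℕ) : SimpleGraph V where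
  Adj u v := u ≠ v ∧ G.dist u v ≤ k
  symm := ⟨fun u v h => ⟨h.1.symm, by rw [SimpleGraph.dist_comm]; exact h.2⟩⟩
  loopless := ⟨fun v h => h.1 rfl⟩

theorem vertex_transitive_power_degree {V : Type*} [Fintype V] (G : SimpleGraph V) (d k : ℕ)
    (hconn : G.Connected) (hreg : ∀ v : V, (G.neighborSet v).ncard = d)
    (htrans : ∀ u v : V, ∃ φ : G ≃g G, φ u = v)
    (hk : 0 < k) (hdiam : ∃ x y : V, k < G.dist x y) :
    (∀ v : V, ((2 * k + 1) * (d + 1) / 3 - 1 : ℝ) ≤ ((G.power k).neighborSet v).ncard) ∧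
    ((2 * k + 1) * (d + 1) / 3 - 1 : ℝ) ≤
      (∑ v : V, (((G.power k).neighborSet v).ncard : ℝ)) / (Fintype.card V) := by
  classical
  obtain ⟨x0, y0, hxy⟩ := hdiam
  have hcand : ∃ X : Set V, MaderAux.cand G X :=
    ⟨MaderAux.ball G x0 0, MaderAux.cand_ball hconn x0 0 ⟨y0, by omega⟩⟩
  have hκ : 2 * (d + 1) ≤ 3 * MaderAux.kappa G := MaderAux.kappa_bound hconn hreg htrans hcand
  have hmain : ∀ v : V, ((2 * k + 1) * (d + 1) / 3 - 1 : ℝ) ≤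
      ((G.power k).neighborSet v).ncard := by
    intro v
    have hfar : ∃ u, k < G.dist v u := by
      obtain ⟨φ, hφ⟩ := htrans x0 v
      exact ⟨φ y0, by rw [← hφ, MaderAux.iso_dist hconn]; exact hxy⟩
    have hset : (G.power k).neighborSet v = MaderAux.ringS G v k := by
      ext u
      simp only [SimpleGraph.mem_neighborSet, MaderAux.ringS, Set.mem_setOf_eq,
        SimpleGraph.power]
      constructor
      · rintro ⟨hne, hle⟩
        exact ⟨hconn.pos_dist_of_ne hne, hle⟩
      · rintro ⟨h1, h2⟩
        refine ⟨fun h => ?_, h2⟩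
        rw [h, SimpleGraph.dist_self] at h1
        omega
    have hcard : d + (k - 1) * MaderAux.kappa G ≤ ((G.power k).neighborSet v).ncard := by
      rw [hset]; exact MaderAux.ringS_card hconn v hk hfar (hreg v)
    obtain ⟨j, rfl⟩ : ∃ j, k = j + 1 := ⟨k - 1, by omega⟩
    have hj : j + 1 - 1 = j := by omega
    rw [hj] at hcard
    have h2 : j * (2 * (d + 1)) ≤ j * (3 * MaderAux.kappa G) := Nat.mul_le_mul_left j hκ
    have hnat : (2 * (j + 1) + 1) * (d + 1) ≤
        3 * ((G.power (j + 1)).neighborSet v).ncard + 3 := by nlinarith [hcard, h2]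
    have hreal : (((2 * (j + 1) + 1) * (d + 1) : ℕ) : ℝ) ≤
        3 * (((G.power (j + 1)).neighborSet v).ncard : ℝ) + 3 := by exact_mod_cast hnat
    push_cast at hreal ⊢
    linarith
  refine ⟨hmain, ?_⟩
  have hne : Nonempty V := ⟨x0⟩
  have hpos : 0 < (Fintype.card V : ℝ) := by exact_mod_cast Fintype.card_pos
  rw [le_div_iff₀ hpos]
  have hsum := Finset.card_nsmul_le_sum Finset.univ
    (fun v => (((G.power k).neighborSet v).ncard : ℝ))
    ((2 * k + 1) * (d + 1) / 3 - 1 : ℝ) (fun v _ => hmain v)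
  rw [Finset.card_univ, nsmul_eq_mul] at hsum
  linarith
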